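/- Let f : ℝ^D → ℝ be twice continuously differentiable with γ_H-Lipschitz Hessian, and let xᵢ, xⱼ ∈ ℝ^D be distinct with noiseless values. If a vector g ∈ ℝ^D belongs to the gradient slab determined by the pair, i.e. |g̃ᵢⱼ − ⟨g, uᵢⱼ⟩| ≤ (1/2)·μᵢⱼ·‖H(xᵢ)‖ + (1/6)·μᵢⱼ²·γ_H, then its directional error with respect to the true gradient satisfies |⟨g − ∇f(xᵢ), uᵢⱼ⟩| ≤ μᵢⱼ·‖H(xᵢ)‖ + (1/3)·μᵢⱼ²·γ_H. -/

import Mathlib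

set_option maxHeartbeats 1000000

open Set InnerProductSpace

lemma taylor2_bound {D : ℕ} (f : EuclideanSpace ℝ (Fin D) → ℝ)
    (hf : ContDiff ℝ 2 f) (γH : ℝ)
    (hLip : ∀ x₁ x₂ : EuclideanSpace ℝ (Fin D),
      ‖iteratedFDeriv ℝ 2 f x₁ - iteratedFDeriv ℝ 2 f x₂‖ ≤ γH * ‖x₁ - x₂‖)
    (a d : EuclideanSpace ℝ (Fin D)) :
    |f (a + d) - f a - fderiv ℝ f a d| ≤
      (1/2) * ‖iteratedFDeriv ℝ 2 f a‖ * ‖d‖^2 + (1/6) * γH * ‖d‖^3 := by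
  set K := ‖iteratedFDeriv ℝ 2 f a‖ with hK
  set m := ‖d‖ with hm
  have hf1 : ContDiff ℝ 1 (fderiv ℝ f) := hf.fderiv_right (le_refl _)
  set c : ℝ → EuclideanSpace ℝ (Fin D) := fun t => a + t • d with hc_def
  have hc : ∀ t : ℝ, HasDerivAt c d t := by
    intro t
    have : HasDerivAt (fun t : ℝ => t • d) ((1:ℝ) • d) t :=
      (hasDerivAt_id t).smul_const d
    have h2 := this.const_add a
    rw [one_smul] at h2
    exact h2
  have hc0 : c 0 = a := by simp [hc_def]
  have hc1 : c 1 = a + d := by simp [hc_def]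
  have hφ : ∀ t : ℝ, HasDerivAt (fun s => f (c s)) (fderiv ℝ f (c t) d) t := by
    intro t
    exact ((hf.differentiable (by norm_num)).differentiableAt.hasFDerivAt).comp_hasDerivAt t (hc t)
  have hχ : ∀ t : ℝ, HasDerivAt (fun s => fderiv ℝ f (c s) d)
      (fderiv ℝ (fderiv ℝ f) (c t) d d) t := by
    intro t
    have h1 : HasDerivAt (fun s => fderiv ℝ f (c s)) (fderiv ℝ (fderiv ℝ f) (c t) d) t :=
      ((hf1.differentiable (by norm_num)).differentiableAt.hasFDerivAt).comp_hasDerivAt t (hc t)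
    exact (ContinuousLinearMap.apply ℝ ℝ d).hasFDerivAt.comp_hasDerivAt t h1
  -- pointwise second-derivative bound along the segment
  have hpt : ∀ s : ℝ, 0 ≤ s → |fderiv ℝ (fderiv ℝ f) (c s) d d| ≤ (K + γH * (s * m)) * m^2 := by
    intro s hs
    have e1 : fderiv ℝ (fderiv ℝ f) (c s) d d = iteratedFDeriv ℝ 2 f (c s) ![d, d] := by
      rw [iteratedFDeriv_two_apply]; simp
    have e2 : ‖iteratedFDeriv ℝ 2 f (c s) ![d, d]‖ ≤ ‖iteratedFDeriv ℝ 2 f (c s)‖ * (m * m) := by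
      have := (iteratedFDeriv ℝ 2 f (c s)).le_opNorm ![d, d]
      simpa [Fin.prod_univ_two, hm] using this
    have e3 : ‖iteratedFDeriv ℝ 2 f (c s)‖ ≤ K + γH * (s * m) := by
      have h4 := hLip (c s) a
      have h5 : ‖c s - a‖ = s * m := by
        simp [hc_def, norm_smul, abs_of_nonneg hs, hm]
      have h6 : ‖iteratedFDeriv ℝ 2 f (c s)‖ - K ≤ ‖iteratedFDeriv ℝ 2 f (c s) - iteratedFDeriv ℝ 2 f a‖ :=
        norm_sub_norm_le _ _
      rw [h5] at h4
      linarith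
    calc |fderiv ℝ (fderiv ℝ f) (c s) d d| = ‖iteratedFDeriv ℝ 2 f (c s) ![d, d]‖ := by
          rw [e1]; rfl
      _ ≤ ‖iteratedFDeriv ℝ 2 f (c s)‖ * (m * m) := e2
      _ ≤ (K + γH * (s * m)) * (m * m) := by
          apply mul_le_mul_of_nonneg_right e3 (by positivity)
      _ = (K + γH * (s * m)) * m^2 := by ring
  have hm0 : (0:ℝ) ≤ m := norm_nonneg d
  -- Step A: bound on derivative difference
  have stepA : ∀ t ∈ Icc (0:ℝ) 1,
      ‖fderiv ℝ f (c t) d - fderiv ℝ f a d‖ ≤ K * m^2 * t + γH/2 * m^3 * t^2 := by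
    have := image_norm_le_of_norm_deriv_right_le_deriv_boundary
      (f := fun s => fderiv ℝ f (c s) d - fderiv ℝ f a d)
      (f' := fun s => fderiv ℝ (fderiv ℝ f) (c s) d d)
      (a := 0) (b := 1)
      (B := fun t => K * m^2 * t + γH/2 * m^3 * t^2)
      (B' := fun t => K * m^2 + γH * m^3 * t)
      ?_ ?_ ?_ ?_ ?_
    · exact fun t ht => this ht
    · exact fun x _ => (((hχ x).sub_const _)).continuousAt.continuousWithinAt
    · intro x _
      exact (((hχ x).sub_const _)).hasDerivWithinAt
    · simp [hc0]
    · intro x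
      have h1 : HasDerivAt (fun t : ℝ => K * m^2 * t) (K * m^2) x := by
        simpa using (hasDerivAt_id x).const_mul (K * m^2)
      have h2 : HasDerivAt (fun t : ℝ => γH/2 * m^3 * t^2) (γH/2 * m^3 * (2 * x)) x := by
        simpa using ((hasDerivAt_pow 2 x)).const_mul (γH/2 * m^3)
      have := h1.add h2
      convert this using 1
      · rfl
      · rfl
      · rfl
      ring
    · intro x hx
      have := hpt x hx.1
      calc ‖fderiv ℝ (fderiv ℝ f) (c x) d d‖ = |fderiv ℝ (fderiv ℝ f) (c x) d d| := rfl
        _ ≤ (K + γH * (x * m)) * m^2 := this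
        _ = K * m^2 + γH * m^3 * x := by ring
  -- Step B: Taylor bound
  have stepB : ∀ t ∈ Icc (0:ℝ) 1,
      ‖f (c t) - f a - t * fderiv ℝ f a d‖ ≤ (1/2) * K * m^2 * t^2 + γH/6 * m^3 * t^3 := by
    have := image_norm_le_of_norm_deriv_right_le_deriv_boundary
      (f := fun t => f (c t) - f a - t * fderiv ℝ f a d)
      (f' := fun t => fderiv ℝ f (c t) d - fderiv ℝ f a d)
      (a := 0) (b := 1)
      (B := fun t => (1/2) * K * m^2 * t^2 + γH/6 * m^3 * t^3)
      (B' := fun t => K * m^2 * t + γH/2 * m^3 * t^2)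
      ?_ ?_ ?_ ?_ ?_
    · exact fun t ht => this ht
    · intro x _
      have h := ((hφ x).sub_const (f a)).sub ((hasDerivAt_id x).mul_const (fderiv ℝ f a d))
      exact h.continuousAt.continuousWithinAt
    · intro x _
      have h := ((hφ x).sub_const (f a)).sub ((hasDerivAt_id x).mul_const (fderiv ℝ f a d))
      have h' := h.hasDerivWithinAt (s := Ici x)
      rw [one_mul] at h'
      exact h'
    · simp [hc0]
    · intro x
      have h1 : HasDerivAt (fun t : ℝ => (1/2) * K * m^2 * t^2) ((1/2) * K * m^2 * (2 * x)) x := by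
        simpa using ((hasDerivAt_pow 2 x)).const_mul ((1/2) * K * m^2)
      have h2 : HasDerivAt (fun t : ℝ => γH/6 * m^3 * t^3) (γH/6 * m^3 * (3 * x^2)) x := by
        simpa using ((hasDerivAt_pow 3 x)).const_mul (γH/6 * m^3)
      have := h1.add h2
      convert this using 1
      · rfl
      · rfl
      · rfl
      ring
    · intro x hx
      exact stepA x (Ico_subset_Icc_self hx)
  have := stepB 1 (by constructor <;> norm_num)
  rw [hc1] at this
  calc |f (a + d) - f a - fderiv ℝ f a d| = ‖f (a + d) - f a - (1:ℝ) * fderiv ℝ f a d‖ := by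
        norm_num
    _ ≤ (1/2) * K * m^2 * 1^2 + γH/6 * m^3 * 1^3 := this
    _ = (1/2) * K * m^2 + (1/6) * γH * m^3 := by ring

/-- Any vector in the gradient slab has directional error (w.r.t.
the true gradient) at most twice the slab half-width. -/
theorem sage_slab_directional_error
    {D : ℕ} (hD : 1 ≤ D)
    (f : EuclideanSpace ℝ (Fin D) → ℝ)
    (hf : ContDiff ℝ 2 f)
    (γH : ℝ) (hγH : 0 ≤ γH)
    (hLip : ∀ x₁ x₂ : EuclideanSpace ℝ (Fin D),
      ‖iteratedFDeriv ℝ 2 f x₁ - iteratedFDeriv ℝ 2 f x₂‖ ≤ γH * ‖x₁ - x₂‖)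
    (xi xj : EuclideanSpace ℝ (Fin D)) (hne : xi ≠ xj)
    (g : EuclideanSpace ℝ (Fin D))
    (hg : |(f xj - f xi) / ‖xj - xi‖ -
            (inner ℝ g ((‖xj - xi‖)⁻¹ • (xj - xi)) : ℝ)| ≤
          (1 / 2) * ‖xj - xi‖ * ‖iteratedFDeriv ℝ 2 f xi‖ +
            (1 / 6) * ‖xj - xi‖ ^ 2 * γH) :
    |(inner ℝ (g - gradient f xi) ((‖xj - xi‖)⁻¹ • (xj - xi)) : ℝ)| ≤
      ‖xj - xi‖ * ‖iteratedFDeriv ℝ 2 f xi‖ + (1 / 3) * ‖xj - xi‖ ^ 2 * γH := by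
  set d : EuclideanSpace ℝ (Fin D) := xj - xi with hd
  set μ : ℝ := ‖xj - xi‖ with hμ
  set u : EuclideanSpace ℝ (Fin D) := μ⁻¹ • d with hu
  set K : ℝ := ‖iteratedFDeriv ℝ 2 f xi‖ with hKdef
  have hdne : d ≠ 0 := sub_ne_zero.mpr hne.symm
  have hμpos : 0 < μ := by rw [hμ]; exact norm_pos_iff.mpr hdne
  have hgrad : (inner ℝ (gradient f xi) u : ℝ) = μ⁻¹ * fderiv ℝ f xi d := by
    have h1 : (inner ℝ (gradient f xi) u : ℝ) = InnerProductSpace.toDual ℝ _ (gradient f xi) u := by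
      rw [InnerProductSpace.toDual_apply_apply]
    rw [h1]
    have h2 : InnerProductSpace.toDual ℝ _ (gradient f xi) = fderiv ℝ f xi := by
      simp [gradient]
    rw [h2, hu, map_smul]
    rfl
  have htay := taylor2_bound f hf γH hLip xi d
  have hxid : xi + d = xj := by rw [hd]; abel
  rw [hxid] at htay
  have hinner : (inner ℝ (g - gradient f xi) u : ℝ) =
      μ⁻¹ * (f xj - f xi - fderiv ℝ f xi d) -
        ((f xj - f xi) / μ - (inner ℝ g u : ℝ)) := by
    rw [inner_sub_left, hgrad]
    field_simp
    ring
  rw [hinner]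
  have h3 : |μ⁻¹ * (f xj - f xi - fderiv ℝ f xi d) - ((f xj - f xi) / μ - (inner ℝ g u : ℝ))| ≤
      μ⁻¹ * |f xj - f xi - fderiv ℝ f xi d| + |(f xj - f xi) / μ - (inner ℝ g u : ℝ)| := by
    refine (abs_sub _ _).trans ?_
    rw [abs_mul, abs_of_nonneg (le_of_lt (inv_pos.mpr hμpos))]
  refine h3.trans ?_
  have h4 : μ⁻¹ * |f xj - f xi - fderiv ℝ f xi d| ≤
      μ⁻¹ * ((1/2) * K * μ^2 + (1/6) * γH * μ^3) := by
    apply mul_le_mul_of_nonneg_left _ (le_of_lt (inv_pos.mpr hμpos))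
    convert htay using 2 <;> rw [hd, hμ] <;> ring
  have h5 : μ⁻¹ * ((1/2) * K * μ^2 + (1/6) * γH * μ^3) = (1/2) * μ * K + (1/6) * μ^2 * γH := by
    field_simp
  rw [h5] at h4
  linarith
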